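/- Let f be a homogeneous polynomial of degree m ≥ 1 in k variables with rational coefficients, and let A be a k×k matrix with integer entries and determinant ±1 which is hyperbolic, i.e. every root λ ∈ ℂ of its characteristic polynomial satisfies |λ| ≠ 1. Assume f(Ax) = f(x) for all x. Then for every p ∈ ℚ, if there exists a nonzero x ∈ ℤ^k with f(x) = p, then the set S_p = { x ∈ ℤ^k : f(x) = p } is infinite. -/

import Mathlib

open Polynomial Matrix

/-- Evaluating the characteristic polynomial at a scalar gives the determinant of `z • 1 - M`. -/
lemma charpoly_eval_eq_det' {k : ℕ} (M : Matrix (Fin k) (Fin k) ℂ) (z : ℂ) :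
    M.charpoly.eval z = (z • (1 : Matrix (Fin k) (Fin k) ℂ) - M).det := by
  have hmap : (charmatrix M).map (Polynomial.evalRingHom z)
      = z • (1 : Matrix (Fin k) (Fin k) ℂ) - M := by
    ext i j
    by_cases h : i = j <;>
      simp [charmatrix_apply, h, Matrix.smul_apply, Matrix.one_apply, Matrix.diagonal_apply]
  calc M.charpoly.eval z = (Polynomial.evalRingHom z) (charmatrix M).det := rfl
    _ = ((charmatrix M).map (Polynomial.evalRingHom z)).det := by
          rw [RingHom.map_det, RingHom.mapMatrix_apply]
    _ = (z • (1 : Matrix (Fin k) (Fin k) ℂ) - M).det := by rw [hmap]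

/-- if a nonconstant homogeneous polynomial `f` with rational coefficients is
invariant under a hyperbolic unimodular integer matrix `A`, then for every `p ∈ ℚ`, if the
level set `S_p = {x ∈ ℤ^k : f(x) = p}` contains a nonzero point, it is infinite. -/
theorem integer_level_set_infinite (k m : ℕ) (hm : 1 ≤ m)
    (f : MvPolynomial (Fin k) ℚ) (hf : f.IsHomogeneous m)
    (A : Matrix (Fin k) (Fin k) ℤ) (hdet : A.det = 1 ∨ A.det = -1)
    (hhyp : ∀ z : ℂ, Polynomial.aeval z A.charpoly = 0 → ‖z‖ ≠ 1)
    (hinv : ∀ x : Fin k → ℚ,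
      MvPolynomial.eval (fun i => ∑ j, (A i j : ℚ) * x j) f = MvPolynomial.eval x f)
    (p : ℚ) (x₀ : Fin k → ℤ) (hx₀ : x₀ ≠ 0)
    (hfx₀ : MvPolynomial.eval (fun i => (x₀ i : ℚ)) f = p) :
    {x : Fin k → ℤ | MvPolynomial.eval (fun i => (x i : ℚ)) f = p}.Infinite := by
  classical
  -- complex version of A and of x₀
  set C : Matrix (Fin k) (Fin k) ℂ := A.map (Int.cast : ℤ → ℂ) with hC
  set v : Fin k → ℂ := fun i => (x₀ i : ℂ) with hv
  have hvne : v ≠ 0 := by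
    intro h
    apply hx₀
    funext i
    have := congrFun h i
    simpa [hv] using this
  have hCunit : IsUnit C := by
    rw [Matrix.isUnit_iff_isUnit_det]
    have : C.det = ((A.det : ℤ) : ℂ) := by
      rw [hC]
      have := RingHom.map_det (Int.castRingHom ℂ) A
      rw [RingHom.mapMatrix_apply] at this
      exact this.symm
    rw [this]
    rcases hdet with h | h <;> simp [h]
  -- invariance of f along the integer orbit
  have hstep : ∀ x : Fin k → ℤ,
      MvPolynomial.eval (fun i => ((A.mulVec x) i : ℚ)) f
        = MvPolynomial.eval (fun i => (x i : ℚ)) f := by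
    intro x
    have hvec : (fun i => ((A.mulVec x) i : ℚ))
        = fun i => ∑ j, (A i j : ℚ) * ((x j : ℚ)) := by
      funext i
      simp only [Matrix.mulVec, dotProduct]
      push_cast
      rfl
    rw [hvec]
    exact hinv (fun j => (x j : ℚ))
  have horbit : ∀ n : ℕ,
      MvPolynomial.eval (fun i => (((A ^ n).mulVec x₀) i : ℚ)) f = p := by
    intro n
    induction n with
    | zero => simpa using hfx₀
    | succ n ih =>
        have : (A ^ (n + 1)).mulVec x₀ = A.mulVec ((A ^ n).mulVec x₀) := by
          rw [Matrix.mulVec_mulVec, pow_succ']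
        rw [this, hstep]
        exact ih
  -- key: no nonzero fixed vector for positive powers of C
  have key : ∀ d : ℕ, 0 < d → (C ^ d).mulVec v ≠ v := by
    intro d hd heq
    have h1 : (1 : ℂ) ∈ spectrum ℂ (C ^ d) := by
      rw [spectrum.mem_iff]
      intro hu
      have hinj := Matrix.mulVec_injective_iff_isUnit.mpr hu
      have hz : (algebraMap ℂ (Matrix (Fin k) (Fin k) ℂ) 1 - C ^ d).mulVec v
          = (algebraMap ℂ (Matrix (Fin k) (Fin k) ℂ) 1 - C ^ d).mulVec 0 := by
        simp [Matrix.sub_mulVec, heq, Algebra.algebraMap_eq_smul_one,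
          Matrix.smul_mulVec, Matrix.one_mulVec, Matrix.mulVec_zero]
      exact hvne (hinj hz)
    have hpow : C ^ d = Polynomial.aeval C (X ^ d : ℂ[X]) := by simp
    rw [hpow, spectrum.map_polynomial_aeval_of_degree_pos C (X ^ d : ℂ[X])
      (by simpa [Polynomial.degree_pow] using (by exact_mod_cast hd : (0 : WithBot ℕ) < d))] at h1
    obtain ⟨z, hzmem, hz⟩ := h1
    have hzd : z ^ d = 1 := by simpa using hz
    have habs : ‖z‖ = 1 := by
      have h2 : ‖z‖ ^ d = 1 := by
        rw [← norm_pow, hzd]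
        exact norm_one
      have h3 := norm_nonneg z
      by_contra hne
      rcases lt_or_gt_of_ne hne with hlt | hgt
      · have := pow_lt_one₀ h3 hlt hd.ne'
        rw [h2] at this
        exact lt_irrefl 1 this
      · have := one_lt_pow₀ hgt hd.ne'
        rw [h2] at this
        exact lt_irrefl 1 this
    -- z is a root of the characteristic polynomial of A
    have hdet0 : (z • (1 : Matrix (Fin k) (Fin k) ℂ) - C).det = 0 := by
      rw [spectrum.mem_iff] at hzmem
      by_contra hne
      exact hzmem (by
        rw [Matrix.isUnit_iff_isUnit_det]
        have : algebraMap ℂ (Matrix (Fin k) (Fin k) ℂ) z - C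
            = z • (1 : Matrix (Fin k) (Fin k) ℂ) - C := by
          rw [Algebra.algebraMap_eq_smul_one]
        rw [this]
        exact isUnit_iff_ne_zero.mpr hne)
    have hroot : Polynomial.aeval z A.charpoly = 0 := by
      have hcp : C.charpoly = A.charpoly.map (Int.castRingHom ℂ) := by
        rw [hC]
        exact Matrix.charpoly_map A (Int.castRingHom ℂ)
      have : C.charpoly.eval z = 0 := by
        rw [charpoly_eval_eq_det']; exact hdet0
      rw [hcp, Polynomial.eval_map] at this
      simpa [Polynomial.aeval_def] using this
    exact hhyp z hroot habs
  -- casting the integer orbit to ℂ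
  have hcast : ∀ n : ℕ, (fun i => (((A ^ n).mulVec x₀) i : ℂ)) = (C ^ n).mulVec v := by
    intro n
    funext i
    have hCn : C ^ n = (A ^ n).map (Int.cast : ℤ → ℂ) := by
      rw [hC]
      have := map_pow ((Int.castRingHom ℂ).mapMatrix) A n
      simpa [RingHom.mapMatrix_apply] using this.symm
    rw [hCn]
    simp only [Matrix.mulVec, dotProduct, Matrix.map_apply, hv]
    push_cast
    rfl
  -- injectivity of the orbit map
  have hinj : Function.Injective (fun n : ℕ => (A ^ n).mulVec x₀) := by
    have main : ∀ a b : ℕ, a < b → (A ^ a).mulVec x₀ = (A ^ b).mulVec x₀ → False := by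
      intro a b hab heq
      set d := b - a with hd
      have hdpos : 0 < d := by omega
      have hb : b = a + d := by omega
      have hCa : (C ^ a).mulVec v = (C ^ b).mulVec v := by
        rw [← hcast, ← hcast, heq]
      have hCsplit : (C ^ b).mulVec v = (C ^ a).mulVec ((C ^ d).mulVec v) := by
        rw [Matrix.mulVec_mulVec, ← pow_add, ← hb]
      have hCainj : Function.Injective ((C ^ a).mulVec) :=
        Matrix.mulVec_injective_iff_isUnit.mpr (hCunit.pow a)
      have : v = (C ^ d).mulVec v := hCainj (by rw [hCa, hCsplit])
      exact key d hdpos this.symm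
    intro a b hab
    simp only at hab
    rcases lt_trichotomy a b with h | h | h
    · exact absurd hab (fun hh => main a b h hh)
    · exact h
    · exact absurd hab.symm (fun hh => main b a h hh)
  -- conclude
  apply Set.infinite_of_injective_forall_mem hinj
  intro n
  exact horbit n
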